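/- arXiv:2211.06515 — 2 statements merged into one kernel-verified Lean document; each statement's English description precedes it below -/
import Mathlib

section
/- Let g: R^n → R and g_c: R^{n_c} → R be twice differentiable, let P: R^{n_c} → R^n, Π: R^n → R^{n_c}, R: R^n → R^{n_c} be linear maps satisfying R H_g(x) P = H_{g_c}(Π x), where H_g, H_{g_c} denote Hessians. Suppose x_c is an exact minimizer (critical point) of the FAS coarse functional ĝ_c(y) = g_c(y) - y^T (∇g_c(Πx) - R∇g(x)), and define x_new = x + P(x_c - Πx). Then, up to first order terms in the Taylor expansion (i.e., discarding terms of order ≥ 2 in x_c - Πx), R ∇g(x_new) = 0. -/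
open Matrix

/-- FAS first-order consistency: if `x_c` is a critical point of the τ-corrected coarse
functional, the Hessian compatibility `R H_g(x) P = H_{g_c}(Πx)` holds, and the Taylor
expansions are truncated at first order (modelled as exact first-order expansion
hypotheses), then `R ∇g(x_new) = 0` for `x_new = x + P(x_c - Πx)`. -/
theorem fas_first_order_consistency
    (n nc : ℕ)
    (gradg : (Fin n → ℝ) → (Fin n → ℝ))
    (gradgc : (Fin nc → ℝ) → (Fin nc → ℝ))
    (Hg : (Fin n → ℝ) → Matrix (Fin n) (Fin n) ℝ)
    (Hgc : (Fin nc → ℝ) → Matrix (Fin nc) (Fin nc) ℝ)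
    (P : Matrix (Fin n) (Fin nc) ℝ)
    (Pi : Matrix (Fin nc) (Fin n) ℝ)
    (R : Matrix (Fin nc) (Fin n) ℝ)
    (x : Fin n → ℝ) (xc : Fin nc → ℝ)
    (hHess : R * Hg x * P = Hgc (Pi.mulVec x))
    -- x_c is a critical point of ĝ_c(y) = g_c(y) - yᵀ(∇g_c(Πx) - R∇g(x))
    (hcrit : gradgc xc - (gradgc (Pi.mulVec x) - R.mulVec (gradg x)) = 0)
    -- first-order Taylor expansion of ∇g_c about Πx (second-order terms discarded)
    (hTaylorCoarse : gradgc xc =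
      gradgc (Pi.mulVec x) + (Hgc (Pi.mulVec x)).mulVec (xc - Pi.mulVec x))
    -- first-order Taylor expansion of ∇g about x (second-order terms discarded)
    (hTaylorFine : gradg (x + P.mulVec (xc - Pi.mulVec x)) =
      gradg x + (Hg x).mulVec (P.mulVec (xc - Pi.mulVec x))) :
    R.mulVec (gradg (x + P.mulVec (xc - Pi.mulVec x))) = 0 := by
  rw [hTaylorFine, Matrix.mulVec_add, Matrix.mulVec_mulVec, Matrix.mulVec_mulVec, hHess]
  have h2 : (Hgc (Pi.mulVec x)).mulVec (xc - Pi.mulVec x) = - R.mulVec (gradg x) := by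
    have h := hcrit
    rw [hTaylorCoarse] at h
    linear_combination (norm := abel) h
  rw [h2]; abel
end

section
/- Let P_k, π_k satisfy π_k P_k = I for all layers, and define the coarse network parameters by W_k^c = π_{k+1} W_k P_k and b_k^c = π_{k+1} b_k (i.e., x_c = Πx). Suppose the fine parameters lie in the range of the prolongation, i.e., x = P(x̂) for some coarse tuple x̂ (so W_k = P_{k+1} Ŵ_k π_k and b_k = P_{k+1} b̂_k). Then the coarse network obtained by restriction recovers x̂ exactly: W_k^c = Ŵ_k and b_k^c = b̂_k; moreover, if additionally P_k φ(z) = φ(P_k z) for the activation φ and all relevant z, then the fine network output satisfies DNN(x; P_0 y_c) = P_{n_L+1} DNN_c(x̂; y_c) for every coarse input y_c. -/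
open Matrix

/-- Feedforward network map: `dnnOut d W b φ L y` applies `L` layers
`y ↦ φ.(W_k y + b_k)` (componentwise activation `φ`) to the input `y`. -/
def dnnOut (d : ℕ → ℕ) (W : ∀ k : ℕ, Matrix (Fin (d (k + 1))) (Fin (d k)) ℝ)
    (b : ∀ k : ℕ, Fin (d (k + 1)) → ℝ) (φ : ℝ → ℝ) :
    (L : ℕ) → (Fin (d 0) → ℝ) → (Fin (d L) → ℝ)
  | 0, y => y
  | (L + 1), y => fun i => φ (((W L).mulVec (dnnOut d W b φ L y) + b L) i)

/-- If `π_k P_k = I` and the fine parameters lie in the range of the prolongation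
(`W_k = P_{k+1} Ŵ_k π_k`, `b_k = P_{k+1} b̂_k`), then restriction recovers the coarse
parameters exactly (`π_{k+1} W_k P_k = Ŵ_k`, `π_{k+1} b_k = b̂_k`); moreover if the
activation `φ` commutes with each `P_k`, the fine network output satisfies
`DNN(x; P₀ y_c) = P_{n_L+1} DNN_c(x̂; y_c)` for every coarse input `y_c`. -/
theorem restriction_recovers_coarse_and_output_consistency
    (nL : ℕ) (n ncd : ℕ → ℕ)
    (P : ∀ k : ℕ, Matrix (Fin (n k)) (Fin (ncd k)) ℝ)
    (pi : ∀ k : ℕ, Matrix (Fin (ncd k)) (Fin (n k)) ℝ)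
    (hproj : ∀ k : ℕ, pi k * P k = 1)
    (What : ∀ k : ℕ, Matrix (Fin (ncd (k + 1))) (Fin (ncd k)) ℝ)
    (bhat : ∀ k : ℕ, Fin (ncd (k + 1)) → ℝ)
    (W : ∀ k : ℕ, Matrix (Fin (n (k + 1))) (Fin (n k)) ℝ)
    (b : ∀ k : ℕ, Fin (n (k + 1)) → ℝ)
    -- the fine parameters lie in the range of the prolongation: x = P(x̂)
    (hW : ∀ k, W k = P (k + 1) * What k * pi k)
    (hb : ∀ k, b k = (P (k + 1)).mulVec (bhat k))
    (φ : ℝ → ℝ) :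
    -- restriction recovers x̂ exactly
    (∀ k, pi (k + 1) * W k * P k = What k) ∧
    (∀ k, (pi (k + 1)).mulVec (b k) = bhat k) ∧
    -- if φ commutes with each P_k, the fine output is the prolonged coarse output
    ((∀ (k : ℕ) (z : Fin (ncd k) → ℝ),
        (P k).mulVec (fun i => φ (z i)) = fun i => φ ((P k).mulVec z i)) →
      ∀ yc : Fin (ncd 0) → ℝ,
        dnnOut n W b φ (nL + 1) ((P 0).mulVec yc) =
          (P (nL + 1)).mulVec (dnnOut ncd What bhat φ (nL + 1) yc)) := by
  refine ⟨?_, ?_, ?_⟩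
  · intro k
    rw [hW k, Matrix.mul_assoc, Matrix.mul_assoc, hproj k, Matrix.mul_one,
      ← Matrix.mul_assoc, hproj (k + 1), Matrix.one_mul]
  · intro k
    rw [hb k, Matrix.mulVec_mulVec, hproj (k + 1), Matrix.one_mulVec]
  · intro hφ yc
    have key : ∀ L : ℕ,
        dnnOut n W b φ L ((P 0).mulVec yc) =
          (P L).mulVec (dnnOut ncd What bhat φ L yc) := by
      intro L
      induction L with
      | zero => rfl
      | succ L ih =>
        show (fun i => φ (((W L).mulVec (dnnOut n W b φ L ((P 0).mulVec yc)) + b L) i)) =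
          (P (L + 1)).mulVec
            (fun i => φ (((What L).mulVec (dnnOut ncd What bhat φ L yc) + bhat L) i))
        rw [hφ (L + 1)]
        rw [ih, hW L, hb L]
        simp only [Matrix.mulVec_mulVec, Matrix.mulVec_add, Matrix.mul_assoc,
          hproj, Matrix.mul_one]
    exact key (nL + 1)
end
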